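/- Let R be a commutative Noetherian ring, F : 0 → F_b → ⋯ → F_a → 0 a finite free R-complex with differentials ∂_n, and n an integer with a ≤ n ≤ b. If p is a prime ideal of R such that H_i(F)_p = 0 for all i ≤ n, then the image of the localized map (∂_{n+1})_p : (F_{n+1})_p → (F_n)_p is a free R_p-module of rank s_n = Σ_{i ≤ n} (−1)^{n−i} rank_R F_i, and consequently I_{s_n}(∂_{n+1})_p = R_p. -/

import Mathlib

open Matrix

/-- Convert a Krull-dimension value (in `WithBot ℕ∞`) to an extended real. -/
noncomputable def krullDimToEReal (d : WithBot ℕ∞) : EReal :=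
  WithBot.recBotCoe ⊥ (fun d' => WithTop.recTopCoe ⊤ (fun m : ℕ => ((m : ℝ) : EReal)) d') d

/-- Krull dimension of a ring, as an extended real. -/
noncomputable def ringDimE (R : Type) [CommRing R] : EReal := krullDimToEReal (ringKrullDim R)

/-- Krull dimension of a module: the dimension of `R ⧸ ann M`, `-∞` for the zero module. -/
noncomputable def moduleDimE (R : Type) [CommRing R] (M : Type) [AddCommGroup M] [Module R M] :
    EReal :=
  krullDimToEReal (ringKrullDim (R ⧸ Module.annihilator R M))

/-- A finite free complex `F : 0 → F_b → ⋯ → F_a → 0`, encoded by the ranks of the `F_i`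
and the matrices of the differentials: `d n` is the matrix of `∂_{n+1} : F_{n+1} → F_n`. -/
structure FinFreeComplex (R : Type) [CommRing R] where
  a : ℤ
  b : ℤ
  rank : ℤ → ℕ
  d : ∀ n : ℤ, Matrix (Fin (rank n)) (Fin (rank (n + 1))) R
  rank_eq_zero : ∀ n : ℤ, n < a ∨ b < n → rank n = 0
  d_comp_d : ∀ n : ℤ, d n * d (n + 1) = 0

namespace FinFreeComplex

variable {R : Type} [CommRing R] (F : FinFreeComplex R)

/-- The `n`-th homology of `F`: `ker ∂_n / im ∂_{n+1}`. -/
abbrev homologyAt (n : ℤ) : Type :=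
  ↥(LinearMap.ker (F.d (n - 1)).mulVecLin) ⧸
    (LinearMap.range (F.d (n - 1 + 1)).mulVecLin).comap
      (LinearMap.ker (F.d (n - 1)).mulVecLin).subtype

/-- Foxby's Krull dimension of the complex `F`: `sup { dim H_n(F) - n }`. -/
noncomputable def dim : EReal :=
  ⨆ n : ℤ, (moduleDimE R (F.homologyAt n) - ((n : ℝ) : EReal))

/-- `s_n = Σ_{i ≤ n} (-1)^{n-i} rank F_i`. -/
noncomputable def s (n : ℤ) : ℤ := ∑ᶠ i ∈ Set.Iic n, (-1 : ℤ) ^ (n - i).toNat * (F.rank i : ℤ)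

end FinFreeComplex

/-- The ideal of `s × s` minors of a matrix, with the conventions that it is the unit
ideal when `s ≤ 0` or when the matrix is empty (`0 × 0`), and that an `s × s` minor of a
nonempty matrix is `0` when `s` exceeds the number of rows or columns. -/
noncomputable def minorsIdeal {R : Type} [CommRing R] {p q : ℕ} (A : Matrix (Fin p) (Fin q) R)
    (s : ℤ) : Ideal R :=
  if s ≤ 0 then ⊤
  else if p = 0 ∧ q = 0 then ⊤
  else Ideal.span {x : R | ∃ (f : Fin s.toNat → Fin p) (g : Fin s.toNat → Fin q),
    Function.Injective f ∧ Function.Injective g ∧ x = (A.submatrix f g).det}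

lemma det_mul_expand_rows {S : Type} [CommRing S] {s p : ℕ}
    (U : Matrix (Fin s) (Fin p) S) (C : Matrix (Fin p) (Fin s) S) :
    (U * C).det = ∑ f : Fin s → Fin p, (∏ i, U i (f i)) * (C.submatrix f id).det := by
  have h : (U * C) = Matrix.of fun i => ∑ k : Fin p, U i k • C k := by
    ext i j; simp [Matrix.mul_apply]
  rw [h]
  have h2 := (Matrix.detRowAlternating :
      (Fin s → S) [⋀^Fin s]→ₗ[S] S).toMultilinearMap.map_sum
    (g := fun (i : Fin s) (k : Fin p) => U i k • C k)
  refine h2.trans ?_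
  refine Finset.sum_congr rfl fun f _ => ?_
  have h3 := (Matrix.detRowAlternating :
      (Fin s → S) [⋀^Fin s]→ₗ[S] S).toMultilinearMap.map_smul_univ
    (fun i => U i (f i)) (fun i => C (f i))
  refine h3.trans ?_
  rw [smul_eq_mul]
  rfl

lemma det_mul_expand_cols {S : Type} [CommRing S] {s q : ℕ}
    (B : Matrix (Fin s) (Fin q) S) (V : Matrix (Fin q) (Fin s) S) :
    (B * V).det = ∑ g : Fin s → Fin q, (∏ j, V (g j) j) * (B.submatrix id g).det := by
  rw [← Matrix.det_transpose, Matrix.transpose_mul, det_mul_expand_rows]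
  refine Finset.sum_congr rfl fun g _ => ?_
  rw [← Matrix.det_transpose (B.submatrix id g)]
  congr 1

lemma ker_split {S : Type} [CommRing S] [IsNoetherianRing S] [IsLocalRing S]
    {k m : ℕ} (f : (Fin k → S) →ₗ[S] (Fin m → S))
    [Module.Free S ↥(LinearMap.range f)] [Module.Finite S ↥(LinearMap.range f)] :
    Module.Free S ↥(LinearMap.ker f) ∧ Module.Finite S ↥(LinearMap.ker f) ∧
      Module.finrank S ↥(LinearMap.ker f) + Module.finrank S ↥(LinearMap.range f) = k ∧
      ∃ ρ : (Fin k → S) →ₗ[S] ↥(LinearMap.ker f),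
        ρ.comp (LinearMap.ker f).subtype = LinearMap.id := by
  obtain ⟨σ, hσ⟩ := Module.projective_lifting_property f.rangeRestrict LinearMap.id
    (LinearMap.surjective_rangeRestrict f)
  have hfσ : ∀ y : ↥(LinearMap.range f), f.rangeRestrict (σ y) = y := fun y =>
    congrFun (congrArg DFunLike.coe hσ) y
  have hfσ' : ∀ y : ↥(LinearMap.range f), f (σ y) = (y : Fin m → S) := by
    intro y
    have := congrArg (Subtype.val) (hfσ y)
    simpa using this
  have hmem : ∀ x, x - σ (f.rangeRestrict x) ∈ LinearMap.ker f := by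
    intro x
    simp [LinearMap.mem_ker, map_sub, hfσ']
  let π : (Fin k → S) →ₗ[S] ↥(LinearMap.ker f) :=
    LinearMap.codRestrict _ (LinearMap.id - σ.comp f.rangeRestrict) hmem
  let e : (Fin k → S) ≃ₗ[S] ↥(LinearMap.ker f) × ↥(LinearMap.range f) :=
    LinearEquiv.ofLinear (LinearMap.prod π f.rangeRestrict)
      ((LinearMap.ker f).subtype.comp (LinearMap.fst S _ _) + σ.comp (LinearMap.snd S _ _))
      (by
        apply LinearMap.ext; rintro ⟨⟨z, hz⟩, y⟩
        have hz' : f z = 0 := hz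
        have hz'' : f.rangeRestrict z = 0 := by
          apply Subtype.ext; simpa using hz'
        apply Prod.ext
        · apply Subtype.ext
          simp [π, hz'', hfσ, map_add]
        · simp [map_add, hz'', hfσ])
      (by
        apply LinearMap.ext; intro x
        simp [π])
  have hρ : ∀ x : ↥(LinearMap.ker f),
      ((LinearMap.fst S _ _).comp e.toLinearMap) ((LinearMap.ker f).subtype x) = x := by
    rintro ⟨z, hz⟩
    have hz'' : f.rangeRestrict z = 0 := by
      apply Subtype.ext; simpa using hz
    apply Subtype.ext
    simp [e, π, hz'']
  have hsurj : Function.Surjective ((LinearMap.fst S _ _).comp e.toLinearMap) := by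
    intro z
    exact ⟨(LinearMap.ker f).subtype z, hρ z⟩
  have hKfin : Module.Finite S ↥(LinearMap.ker f) := Module.Finite.of_surjective _ hsurj
  have hρ' : (((LinearMap.fst S _ _).comp e.toLinearMap).comp
      (LinearMap.ker f).subtype) = LinearMap.id := LinearMap.ext hρ
  have hKproj : Module.Projective S ↥(LinearMap.ker f) :=
    Module.Projective.of_split (LinearMap.ker f).subtype _ hρ'
  have hKfp : Module.FinitePresentation S ↥(LinearMap.ker f) :=
    Module.finitePresentation_of_projective _ _
  have hKflat : Module.Flat S ↥(LinearMap.ker f) := Module.Flat.of_projective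
  have hKfree : Module.Free S ↥(LinearMap.ker f) := Module.free_of_flat_of_isLocalRing
  refine ⟨hKfree, hKfin, ?_, _, hρ'⟩
  have h1 := e.finrank_eq
  rw [Module.finrank_prod, Module.finrank_pi, Fintype.card_fin] at h1
  omega

lemma exact_localized {R : Type} [CommRing R] {m k l : ℕ} (A : Matrix (Fin m) (Fin k) R)
    (B : Matrix (Fin k) (Fin l) R) (p : Ideal R) [p.IsPrime]
    (hsub : Subsingleton (LocalizedModule p.primeCompl
      (↥(LinearMap.ker A.mulVecLin) ⧸
        (LinearMap.range B.mulVecLin).comap (LinearMap.ker A.mulVecLin).subtype))) :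
    LinearMap.ker ((A.map (algebraMap R (Localization.AtPrime p))).mulVecLin) ≤
      LinearMap.range ((B.map (algebraMap R (Localization.AtPrime p))).mulVecLin) := by
  classical
  intro y hy
  have hy' : (A.map (algebraMap R (Localization.AtPrime p))) *ᵥ y = 0 := hy
  obtain ⟨t, ht⟩ := IsLocalization.exist_integer_multiples_of_finite p.primeCompl y
  simp only [IsLocalization.IsInteger, RingHom.mem_rangeS] at ht
  choose x hx using ht
  -- hx : ∀ j, algebraMap R _ (x j) = ↑t • y j
  have hAx : ∀ i0, algebraMap R (Localization.AtPrime p) ((A *ᵥ x) i0) = 0 := by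
    intro i0
    rw [RingHom.map_mulVec]
    have hxy : ((algebraMap R (Localization.AtPrime p)) ∘ x) =
        algebraMap R (Localization.AtPrime p) (t : R) • y := by
      funext j
      simp only [Function.comp_apply, hx j, Algebra.smul_def, Pi.smul_apply, smul_eq_mul,
        Algebra.algebraMap_self, RingHom.id_apply]
    rw [hxy, Matrix.mulVec_smul, hy']
    simp
  have hc : ∀ i0, ∃ c : p.primeCompl, (c : R) * (A *ᵥ x) i0 = 0 := fun i0 =>
    (IsLocalization.map_eq_zero_iff p.primeCompl _ _).mp (hAx i0)
  choose c hc using hc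
  set c0 : p.primeCompl := ∏ i0, c i0 with hc0def
  have hc0 : A *ᵥ ((c0 : R) • x) = 0 := by
    funext i0
    rw [Matrix.mulVec_smul]
    obtain ⟨e, he⟩ : ((c i0 : R)) ∣ (c0 : R) := by
      rw [hc0def]
      push_cast
      exact Finset.dvd_prod_of_mem _ (Finset.mem_univ i0)
    show (c0 : R) • (A *ᵥ x) i0 = 0
    rw [smul_eq_mul, he, mul_right_comm, hc i0, zero_mul]
  have hker : (c0 : R) • x ∈ LinearMap.ker A.mulVecLin := by
    rw [LinearMap.mem_ker, Matrix.mulVecLin_apply, hc0]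
  set ξ : ↥(LinearMap.ker A.mulVecLin) := ⟨(c0 : R) • x, hker⟩ with hξdef
  have h0 : (LocalizedModule.mk ((Submodule.Quotient.mk ξ) :
        ↥(LinearMap.ker A.mulVecLin) ⧸
          (LinearMap.range B.mulVecLin).comap (LinearMap.ker A.mulVecLin).subtype)
        (1 : p.primeCompl)) = LocalizedModule.mk 0 1 := Subsingleton.elim _ _
  rw [LocalizedModule.mk_eq] at h0
  obtain ⟨u, hu⟩ := h0
  rw [Submonoid.smul_def, Submonoid.smul_def, Submonoid.smul_def, Submonoid.smul_def] at hu
  simp only [OneMemClass.coe_one, one_smul, smul_zero] at hu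
  rw [← Submodule.Quotient.mk_smul, Submodule.Quotient.mk_eq_zero,
    Submodule.mem_comap] at hu
  obtain ⟨w, hw⟩ := hu
  -- hw : B.mulVecLin w = ↑(↑u • ξ)
  have hw' : B *ᵥ w = (u : R) • (c0 : R) • x := by
    have := hw
    rw [Matrix.mulVecLin_apply] at this
    rw [this]
    rfl
  refine ⟨(IsLocalization.mk' (Localization.AtPrime p) (1 : R) (u * c0 * t)) •
    fun j => algebraMap R (Localization.AtPrime p) (w j), ?_⟩
  rw [_root_.map_smul]
  have h1 : ((B.map (algebraMap R (Localization.AtPrime p))).mulVecLin)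
      (fun j => algebraMap R (Localization.AtPrime p) (w j)) =
      fun i => algebraMap R (Localization.AtPrime p) ((B *ᵥ w) i) := by
    funext i
    rw [Matrix.mulVecLin_apply]
    exact (RingHom.map_mulVec (algebraMap R (Localization.AtPrime p)) B w i).symm
  rw [h1]
  funext i
  have hmk : IsLocalization.mk' (Localization.AtPrime p) (1 : R) (u * c0 * t) *
      algebraMap R (Localization.AtPrime p) ((u : R) * (c0 : R) * (t : R)) = 1 := by
    have := IsLocalization.mk'_spec (Localization.AtPrime p) (1 : R) (u * c0 * t)
    rw [_root_.map_one] at this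
    convert this using 3
    simp
  have hxi : algebraMap R (Localization.AtPrime p) (x i) =
      algebraMap R (Localization.AtPrime p) (t : R) * y i := by
    rw [hx i, Algebra.smul_def]
  calc (IsLocalization.mk' (Localization.AtPrime p) (1 : R) (u * c0 * t) •
        fun i => algebraMap R (Localization.AtPrime p) ((B *ᵥ w) i)) i
      = IsLocalization.mk' (Localization.AtPrime p) (1 : R) (u * c0 * t) *
        algebraMap R (Localization.AtPrime p) ((u : R) * (c0 : R) * x i) := by
        rw [hw']
        simp [smul_eq_mul, mul_assoc]
    _ = (IsLocalization.mk' (Localization.AtPrime p) (1 : R) (u * c0 * t) *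
        algebraMap R (Localization.AtPrime p) ((u : R) * (c0 : R) * (t : R))) * y i := by
        rw [_root_.map_mul, _root_.map_mul, _root_.map_mul, _root_.map_mul, hxi]
        ring
    _ = y i := by rw [hmk, one_mul]


namespace FinFreeComplex
variable {R : Type} [CommRing R] (F : FinFreeComplex R)

lemma s_eq_finset (i : ℤ) :
    F.s i = ∑ j ∈ Finset.Icc F.a i, (-1 : ℤ) ^ (i - j).toNat * (F.rank j : ℤ) := by
  rw [s, ← finsum_mem_coe_finset]
  apply finsum_mem_inter_support_eq'
  intro j hj
  have hrj : F.rank j ≠ 0 := by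
    intro h0
    apply hj
    simp [Function.support, h0]
  have haj : F.a ≤ j := by
    by_contra h
    exact hrj (F.rank_eq_zero j (Or.inl (by omega)))
  simp only [Set.mem_Iic, Finset.coe_Icc, Set.mem_Icc]
  omega

lemma s_eq_zero (i : ℤ) (h : i < F.a) : F.s i = 0 := by
  rw [s_eq_finset, Finset.Icc_eq_empty (by omega), Finset.sum_empty]

lemma s_succ (i : ℤ) (h : F.a - 1 ≤ i) : F.s (i + 1) = (F.rank (i + 1) : ℤ) - F.s i := by
  rcases lt_or_ge i F.a with hlt | hge
  · have hia : i = F.a - 1 := by omega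
    subst hia
    rw [show F.a - 1 + 1 = F.a from by ring]
    rw [F.s_eq_zero (F.a - 1) (by omega), s_eq_finset, Finset.Icc_self, Finset.sum_singleton]
    simp
  · rw [s_eq_finset, s_eq_finset]
    rw [show Finset.Icc F.a (i + 1) = insert (i + 1) (Finset.Icc F.a i) from by
      ext j; simp only [Finset.mem_insert, Finset.mem_Icc]; omega]
    rw [Finset.sum_insert (by simp only [Finset.mem_Icc]; omega)]
    have hterm : ∀ j ∈ Finset.Icc F.a i,
        (-1 : ℤ) ^ (i + 1 - j).toNat * (F.rank j : ℤ) =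
          -((-1 : ℤ) ^ (i - j).toNat * (F.rank j : ℤ)) := by
      intro j hj
      rw [Finset.mem_Icc] at hj
      rw [show (i + 1 - j).toNat = (i - j).toNat + 1 from by omega]
      ring
    rw [Finset.sum_congr rfl hterm, Finset.sum_neg_distrib,
      show i + 1 - (i + 1) = 0 from by ring]
    simp [sub_eq_add_neg]

end FinFreeComplex

lemma FinFreeComplex.mainAux {R S : Type} [CommRing R] [CommRing S] [IsNoetherianRing S]
    [IsLocalRing S] (φ : R →+* S) (F : FinFreeComplex R) (n : ℤ) (han : F.a ≤ n)
    (hexact : ∀ i : ℤ, i + 1 ≤ n →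
      LinearMap.ker ((F.d i).map φ).mulVecLin ≤
        LinearMap.range ((F.d (i + 1)).map φ).mulVecLin) :
    Module.Free S ↥(LinearMap.range ((F.d n).map φ).mulVecLin) ∧
      (Module.finrank S ↥(LinearMap.range ((F.d n).map φ).mulVecLin) : ℤ) = F.s n ∧
      Ideal.map φ (minorsIdeal (F.d n) (F.s n)) = ⊤ := by
  classical
  have hrange_le : ∀ i : ℤ,
      LinearMap.range ((F.d (i + 1)).map φ).mulVecLin ≤
        LinearMap.ker ((F.d i).map φ).mulVecLin := by
    intro i
    rintro _ ⟨x, rfl⟩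
    rw [LinearMap.mem_ker, ← LinearMap.comp_apply, ← Matrix.mulVecLin_mul, ← Matrix.map_mul,
      F.d_comp_d i]
    simp
  have key : ∀ i : ℤ, F.a - 1 ≤ i → i ≤ n →
      Module.Free S ↥(LinearMap.range ((F.d i).map φ).mulVecLin) ∧
      Module.Finite S ↥(LinearMap.range ((F.d i).map φ).mulVecLin) ∧
      (Module.finrank S ↥(LinearMap.range ((F.d i).map φ).mulVecLin) : ℤ) = F.s i ∧
      ∃ ρ : (Fin (F.rank i) → S) →ₗ[S] ↥(LinearMap.range ((F.d i).map φ).mulVecLin),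
        ρ.comp (LinearMap.range ((F.d i).map φ).mulVecLin).subtype = LinearMap.id := by
    refine fun i hi => Int.le_induction (motive := fun j _ => j ≤ n →
      Module.Free S ↥(LinearMap.range ((F.d j).map φ).mulVecLin) ∧
      Module.Finite S ↥(LinearMap.range ((F.d j).map φ).mulVecLin) ∧
      (Module.finrank S ↥(LinearMap.range ((F.d j).map φ).mulVecLin) : ℤ) = F.s j ∧
      ∃ ρ : (Fin (F.rank j) → S) →ₗ[S] ↥(LinearMap.range ((F.d j).map φ).mulVecLin),
        ρ.comp (LinearMap.range ((F.d j).map φ).mulVecLin).subtype = LinearMap.id) ?_ ?_ i hi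
    · intro _
      haveI : IsEmpty (Fin (F.rank (F.a - 1))) := by
        rw [F.rank_eq_zero (F.a - 1) (Or.inl (by omega))]
        infer_instance
      haveI : Subsingleton ↥(LinearMap.range ((F.d (F.a - 1)).map φ).mulVecLin) :=
        inferInstance
      refine ⟨inferInstance, Module.Finite.range _, ?_, 0,
        LinearMap.ext fun x => Subsingleton.elim _ _⟩
      rw [Module.finrank_zero_of_subsingleton, F.s_eq_zero (F.a - 1) (by omega)]
      rfl
    · intro i hi IH hsucc
      obtain ⟨hfree, hfin, hrk, -⟩ := IH (by omega)
      haveI := hfree; haveI := hfin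
      obtain ⟨hKfree, hKfin, hKrk, ρK, hρK⟩ := ker_split (((F.d i).map φ).mulVecLin)
      have hR : LinearMap.range ((F.d (i + 1)).map φ).mulVecLin =
          LinearMap.ker ((F.d i).map φ).mulVecLin :=
        le_antisymm (hrange_le i) (hexact i hsucc)
      have hs : F.s (i + 1) = (F.rank (i + 1) : ℤ) - F.s i := F.s_succ i hi
      refine ⟨?_, ?_, ?_, ?_⟩
      · rw [hR]; exact hKfree
      · rw [hR]; exact hKfin
      · rw [hR, hs, ← hrk]; omega
      · rw [hR]; exact ⟨ρK, hρK⟩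
  obtain ⟨hfree, hfin, hrk, ρ, hρ⟩ := key n (by omega) le_rfl
  refine ⟨hfree, hrk, ?_⟩
  by_cases hs0 : F.s n ≤ 0
  · unfold minorsIdeal
    rw [if_pos hs0, Ideal.map_top]
  push_neg at hs0
  haveI := hfree; haveI := hfin
  obtain ⟨s0, hs0'⟩ : ∃ s0 : ℕ, (F.s n).toNat = s0 := ⟨_, rfl⟩
  have hfr : Module.finrank S ↥(LinearMap.range ((F.d n).map φ).mulVecLin) = s0 := by omega
  by_cases hpq : F.rank n = 0 ∧ F.rank (n + 1) = 0
  · unfold minorsIdeal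
    rw [if_neg (by omega), if_pos hpq, Ideal.map_top]
  unfold minorsIdeal
  rw [if_neg (by omega), if_neg hpq, Ideal.map_span, Ideal.eq_top_iff_one, hs0']
  let bN : Module.Basis (Fin s0) S ↥(LinearMap.range ((F.d n).map φ).mulVecLin) :=
    Module.finBasisOfFinrankEq S ↥(LinearMap.range ((F.d n).map φ).mulVecLin) hfr
  obtain ⟨σ, hσ⟩ := Module.projective_lifting_property (((F.d n).map φ).mulVecLin).rangeRestrict
    LinearMap.id (LinearMap.surjective_rangeRestrict _)
  let u : (Fin (F.rank n) → S) →ₗ[S] (Fin s0 → S) := (bN.equivFun.toLinearMap).comp ρ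
  let v : (Fin s0 → S) →ₗ[S] (Fin (F.rank (n + 1)) → S) := σ.comp bN.equivFun.symm.toLinearMap
  have hcomp : u.comp ((((F.d n).map φ).mulVecLin).comp v) = LinearMap.id := by
    apply LinearMap.ext
    intro z
    have h2 : (((F.d n).map φ).mulVecLin).rangeRestrict (σ (bN.equivFun.symm z)) =
        bN.equivFun.symm z := by
      have := congrFun (congrArg DFunLike.coe hσ) (bN.equivFun.symm z)
      exact this
    have h1 : (((F.d n).map φ).mulVecLin) (σ (bN.equivFun.symm z)) =
        (LinearMap.range ((F.d n).map φ).mulVecLin).subtype (bN.equivFun.symm z) := by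
      rw [show (((F.d n).map φ).mulVecLin) (σ (bN.equivFun.symm z)) =
        (LinearMap.range ((F.d n).map φ).mulVecLin).subtype
          ((((F.d n).map φ).mulVecLin).rangeRestrict (σ (bN.equivFun.symm z))) from rfl,
        h2]
    have h3 : ρ ((LinearMap.range ((F.d n).map φ).mulVecLin).subtype (bN.equivFun.symm z)) =
        bN.equivFun.symm z := by
      have := congrFun (congrArg DFunLike.coe hρ) (bN.equivFun.symm z)
      simpa using this
    show bN.equivFun (ρ ((((F.d n).map φ).mulVecLin) (σ (bN.equivFun.symm z)))) = z
    rw [h1, h3]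
    exact bN.equivFun.apply_symm_apply z
  have hUMV : LinearMap.toMatrix' u * ((F.d n).map φ * LinearMap.toMatrix' v) = 1 := by
    have h0 : (((F.d n).map φ).mulVecLin) = Matrix.toLin' ((F.d n).map φ) :=
      LinearMap.ext fun w => by rw [Matrix.toLin'_apply, Matrix.mulVecLin_apply]
    calc LinearMap.toMatrix' u * ((F.d n).map φ * LinearMap.toMatrix' v)
        = LinearMap.toMatrix' u * (LinearMap.toMatrix' (((F.d n).map φ).mulVecLin) *
          LinearMap.toMatrix' v) := by rw [h0, LinearMap.toMatrix'_toLin']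
      _ = LinearMap.toMatrix' (u.comp ((((F.d n).map φ).mulVecLin).comp v)) := by
          rw [LinearMap.toMatrix'_comp, LinearMap.toMatrix'_comp]
      _ = 1 := by rw [hcomp, LinearMap.toMatrix'_id]
  have hdet : (1 : S) = (LinearMap.toMatrix' u * ((F.d n).map φ * LinearMap.toMatrix' v)).det := by
    rw [hUMV, Matrix.det_one]
  rw [det_mul_expand_rows] at hdet
  rw [hdet]
  apply Ideal.sum_mem
  intro f _
  apply Ideal.mul_mem_left
  have hsub1 : ((F.d n).map φ * LinearMap.toMatrix' v).submatrix f id =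
      ((F.d n).map φ).submatrix f id * LinearMap.toMatrix' v := by
    ext i j; simp [Matrix.mul_apply]
  rw [hsub1, det_mul_expand_cols]
  apply Ideal.sum_mem
  intro g _
  apply Ideal.mul_mem_left
  rw [Matrix.submatrix_submatrix]
  simp only [Function.comp_id, Function.id_comp]
  by_cases hf : Function.Injective f
  · by_cases hg : Function.Injective g
    · apply Ideal.subset_span
      refine ⟨((F.d n).submatrix f g).det, ⟨f, g, hf, hg, rfl⟩, ?_⟩
      rw [RingHom.map_det]
      rfl
    · obtain ⟨a, b, hab, hne⟩ := Function.not_injective_iff.mp hg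
      rw [Matrix.det_zero_of_column_eq hne
        (fun r => by rw [Matrix.submatrix_apply, Matrix.submatrix_apply, hab])]
      exact Ideal.zero_mem _
  · obtain ⟨a, b, hab, hne⟩ := Function.not_injective_iff.mp hf
    rw [Matrix.det_zero_of_row_eq hne
      (funext fun r => by rw [Matrix.submatrix_apply, Matrix.submatrix_apply, hab])]
    exact Ideal.zero_mem _


/-- If all homology modules `H_i(F)` with `i ≤ n` vanish after localizing at a prime `p`,
then the image of the localized map `(∂_{n+1})_p` is a free `R_p`-module of rank `s_n`,
and consequently `I_{s_n}(∂_{n+1}) R_p = R_p`. -/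
theorem FinFreeComplex.image_localized_free_of_homology_vanish (R : Type) [CommRing R]
    [IsNoetherianRing R] (F : FinFreeComplex R) (n : ℤ) (han : F.a ≤ n) (hnb : n ≤ F.b)
    (p : Ideal R) [p.IsPrime]
    (hvanish : ∀ i : ℤ, i ≤ n → Subsingleton (LocalizedModule p.primeCompl (F.homologyAt i))) :
    Module.Free (Localization.AtPrime p)
        ↥(LinearMap.range ((F.d n).map (algebraMap R (Localization.AtPrime p))).mulVecLin) ∧
      (Module.finrank (Localization.AtPrime p)
        ↥(LinearMap.range ((F.d n).map (algebraMap R (Localization.AtPrime p))).mulVecLin) : ℤ)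
        = F.s n ∧
      Ideal.map (algebraMap R (Localization.AtPrime p)) (minorsIdeal (F.d n) (F.s n)) = ⊤ := by
  classical
  haveI : IsNoetherianRing (Localization.AtPrime p) :=
    IsLocalization.isNoetherianRing p.primeCompl _ ‹IsNoetherianRing R›
  have hexact : ∀ i : ℤ, i + 1 ≤ n →
      LinearMap.ker ((F.d i).map (algebraMap R (Localization.AtPrime p))).mulVecLin ≤
        LinearMap.range ((F.d (i + 1)).map (algebraMap R (Localization.AtPrime p))).mulVecLin := by
    intro i hi
    have hv := hvanish (i + 1) hi
    unfold FinFreeComplex.homologyAt at hv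
    have h2 := exact_localized (F.d (i + 1 - 1)) (F.d (i + 1 - 1 + 1)) p hv
    rw [show i + 1 - 1 = i from by ring] at h2
    exact h2
  have h := F.mainAux (algebraMap R (Localization.AtPrime p)) n han hexact
  exact ⟨h.1, h.2.1, h.2.2⟩
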